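/- arXiv:1903.03504 — 2 statements merged into one kernel-verified Lean document; each statement's English description precedes it below -/
import Mathlib

section
/- Let L_MAJ = {x ∈ {0,1}* : x has more 1's than 0's, or x has an equal number of 0's and 1's and x begins with 1}. Then the right quotient L_MAJ{0}^{-1} = {x : x0 ∈ L_MAJ} is not counting-regular, and the left quotient {0}^{-1}(L_MAJ^R) = {x : 0x ∈ L_MAJ^R} is not counting-regular, even though L_MAJ (and hence L_MAJ^R) is counting-regular. Thus the counting-regular languages are not closed under right quotient or left quotient with a single symbol. -/
/-- The counting function of a language: the number of words of length `n`. -/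
noncomputable def countFn {α : Type*} (L : Set (List α)) (n : ℕ) : ℕ :=
  Set.ncard {w | w ∈ L ∧ w.length = n}

/-- A language is regular if it is accepted by a DFA with finitely many states. -/
def IsRegularLang {α : Type*} (L : Set (List α)) : Prop :=
  ∃ (σ : Type) (_ : Fintype σ) (M : DFA α σ), ∀ w, w ∈ M.accepts ↔ w ∈ L

/-- A language is counting-regular if some regular language over a (possibly different)
finite alphabet has the same counting function. -/
def CountingRegular {α : Type*} (L : Set (List α)) : Prop :=
  ∃ (β : Type) (_ : Fintype β) (L' : Set (List β)),
    IsRegularLang L' ∧ ∀ n, countFn L' n = countFn L n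


/-- `L_MAJ`: words over `{0,1}` with more 1's than 0's, or equally many and starting with 1. -/
def LMAJ : Set (List (Fin 2)) :=
  {x | x.count 0 < x.count 1 ∨ (x.count 0 = x.count 1 ∧ x.head? = some 1)}

/-- The reversal `L_MAJ^R`. -/
def LMAJrev : Set (List (Fin 2)) := {w | ∃ v ∈ LMAJ, w = v.reverse}

open Finset

namespace CRaux


def appendEmb (β : Type*) : List β × β ↪ List β :=
  ⟨fun p => p.1 ++ [p.2], by
    rintro ⟨w, a⟩ ⟨w', a'⟩ h
    simp only [Prod.mk.injEq]
    have h2 := congrArg List.reverse h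
    simp at h2
    exact ⟨h2.2, h2.1⟩⟩

def consEmb (β : Type*) : β × List β ↪ List β :=
  ⟨fun p => p.1 :: p.2, by rintro ⟨a, w⟩ ⟨a', w'⟩ h; simpa using h⟩

def allW (β : Type*) [Fintype β] : ℕ → Finset (List β)
  | 0 => {[]}
  | n+1 => ((allW β n) ×ˢ Finset.univ).map (appendEmb β)

variable {β : Type*} [Fintype β]

theorem mem_allW {n : ℕ} {w : List β} : w ∈ allW β n ↔ w.length = n := by
  induction n generalizing w with
  | zero => simp [allW, List.length_eq_zero_iff]
  | succ n ih =>
    simp only [allW, Finset.mem_map, Finset.mem_product, Finset.mem_univ, and_true]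
    constructor
    · rintro ⟨⟨w', a⟩, hw', rfl⟩
      show (w' ++ [a]).length = n + 1
      simp [appendEmb, ih.mp hw']
    · intro hlen
      have hne : w ≠ [] := by rintro rfl; simp at hlen
      refine ⟨⟨w.dropLast, w.getLast hne⟩, ?_, ?_⟩
      · exact ih.mpr (by simp [hlen])
      · show w.dropLast ++ [w.getLast hne] = w
        simp [appendEmb, List.dropLast_append_getLast]

theorem card_filter_allW_succ (n : ℕ) (P : List β → Prop) [DecidablePred P] :
    ((allW β (n+1)).filter P).card
      = ∑ w ∈ allW β n, ∑ a : β, if P (w ++ [a]) then 1 else 0 := by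
  rw [allW, Finset.filter_map, Finset.card_map, Finset.card_filter, Finset.sum_product]
  rfl

theorem allW_succ_cons (n : ℕ) :
    allW β (n+1) = (Finset.univ ×ˢ (allW β n)).map (consEmb β) := by
  ext w
  simp only [mem_allW, Finset.mem_map, Finset.mem_product, Finset.mem_univ, true_and]
  constructor
  · intro hlen
    have hne : w ≠ [] := by rintro rfl; simp at hlen
    refine ⟨⟨w.head hne, w.tail⟩, ?_, ?_⟩
    · simp [mem_allW]; omega
    · show w.head hne :: w.tail = w
      simp [consEmb]
  · rintro ⟨⟨a, t⟩, ht, rfl⟩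
    show (a :: t).length = n + 1
    simpa [consEmb] using ht

theorem card_filter_allW_cons (n : ℕ) (P : List β → Prop) [DecidablePred P] :
    ((allW β (n+1)).filter P).card
      = ∑ a : β, ∑ t ∈ allW β n, if P (a :: t) then 1 else 0 := by
  rw [allW_succ_cons, Finset.filter_map, Finset.card_map, Finset.card_filter, Finset.sum_product]
  rfl

theorem card_allW (n : ℕ) : (allW β n).card = (Fintype.card β) ^ n := by
  induction n with
  | zero => simp [allW]
  | succ n ih => simp [allW, ih, pow_succ]

open Classical in
theorem countFn_eq_card' (L : Set (List β)) (n : ℕ) :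
    Set.ncard {w | w ∈ L ∧ w.length = n} = ((allW β n).filter (fun w => w ∈ L)).card := by
  have h : {w | w ∈ L ∧ w.length = n} = (((allW β n).filter (fun w => w ∈ L)) : Set (List β)) := by
    ext w; simp [mem_allW, and_comm]
  rw [h, Set.ncard_coe_finset]

-- ### counting over Fin 2

theorem count_zero_add_count_one (x : List (Fin 2)) : x.count 0 + x.count 1 = x.length := by
  induction x with
  | nil => simp
  | cons a t ih => fin_cases a <;> simp [List.count_cons] <;> omega

theorem card_count_eq (n k : ℕ) :
    ((allW (Fin 2) n).filter (fun w => w.count 1 = k)).card = n.choose k := by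
  induction n generalizing k with
  | zero =>
    cases k <;> simp [allW, Finset.filter_singleton]
  | succ n ih =>
    rw [card_filter_allW_succ]
    have h0 : ∀ w : List (Fin 2), (w ++ [(0 : Fin 2)]).count 1 = w.count 1 := by
      intro w; simp [List.count_append]
    have h1 : ∀ w : List (Fin 2), (w ++ [(1 : Fin 2)]).count 1 = w.count 1 + 1 := by
      intro w; simp [List.count_append]
    simp only [Fin.sum_univ_two, h0, h1]
    rw [Finset.sum_add_distrib, ← Finset.card_filter, ← Finset.card_filter]
    cases k with
    | zero =>
      have : ((allW (Fin 2) n).filter (fun w => w.count 1 + 1 = 0)) = ∅ := by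
        apply Finset.filter_false_of_mem; intro w _; omega
      rw [this, ih 0]; simp
    | succ k =>
      have : ((allW (Fin 2) n).filter (fun w => w.count 1 + 1 = k + 1))
          = ((allW (Fin 2) n).filter (fun w => w.count 1 = k)) := by
        apply Finset.filter_congr; intro w _; simp
      rw [this, ih (k+1), ih k, Nat.choose_succ_succ']; ring

theorem card_count_head (n : ℕ) (P : ℕ → Prop) [DecidablePred P] :
    ((allW (Fin 2) (n+1)).filter (fun w => P (w.count 1) ∧ w.head? = some 1)).card
      = ((allW (Fin 2) n).filter (fun t => P (t.count 1 + 1))).card := by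
  rw [card_filter_allW_cons, Fin.sum_univ_two]
  have hz : ∀ t : List (Fin 2),
      (if P ((0 :: t : List (Fin 2)).count 1) ∧ (0 :: t : List (Fin 2)).head? = some 1 then 1 else 0) = 0 := by
    intro t
    have : ((0 :: t : List (Fin 2)).head? = some 1) = False := by
      simp
    simp [this]
  have ho : ∀ t : List (Fin 2),
      (if P ((1 :: t : List (Fin 2)).count 1) ∧ (1 :: t : List (Fin 2)).head? = some 1 then 1 else 0)
        = if P (t.count 1 + 1) then 1 else 0 := by
    intro t
    simp [List.count_cons]
  simp only [hz, ho, Finset.sum_const_zero, zero_add, ← Finset.card_filter]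

theorem card_filter_count (n : ℕ) (P : ℕ → Prop) [DecidablePred P] :
    ((allW (Fin 2) n).filter (fun w => P (w.count 1))).card
      = ∑ k ∈ Finset.range (n+1), if P k then n.choose k else 0 := by
  rw [Finset.card_eq_sum_card_fiberwise
    (f := fun w => w.count 1) (t := Finset.range (n+1))
    (fun w hw => by
      simp only [Finset.mem_coe, Finset.mem_range]
      have := List.count_le_length (a := (1 : Fin 2)) (l := w)
      have hl : w.length = n := mem_allW.mp (Finset.mem_filter.mp hw).1
      omega)]
  apply Finset.sum_congr rfl
  intro k _
  rw [Finset.filter_filter]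
  by_cases hP : P k
  · rw [if_pos hP, ← card_count_eq n k]
    congr 1
    apply Finset.filter_congr
    intro w _
    constructor
    · rintro ⟨_, h⟩; exact h
    · rintro h; exact ⟨by rw [h]; exact hP, h⟩
  · rw [if_neg hP]
    have : ((allW (Fin 2) n).filter (fun w => P (w.count 1) ∧ w.count 1 = k)) = ∅ := by
      apply Finset.filter_false_of_mem
      rintro w _ ⟨h1, h2⟩
      exact hP (h2 ▸ h1)
    rw [this, Finset.card_empty]



theorem sum_reflect (N : ℕ) :
    (∑ k ∈ range (N+1), if N+1 < 2*k then N.choose k else 0)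
      = ∑ k ∈ range (N+1), if 2*k+1 < N then N.choose k else 0 := by
  rw [← Finset.sum_filter, ← Finset.sum_filter]
  apply Finset.sum_nbij' (i := fun k => N - k) (j := fun k => N - k)
  · intro a ha
    simp only [Finset.mem_filter, Finset.mem_range] at ha ⊢
    omega
  · intro a ha
    simp only [Finset.mem_filter, Finset.mem_range] at ha ⊢
    omega
  · intro a ha
    simp only [Finset.mem_filter, Finset.mem_range] at ha
    omega
  · intro a ha
    simp only [Finset.mem_filter, Finset.mem_range] at ha
    omega
  · intro a ha
    simp only [Finset.mem_filter, Finset.mem_range] at ha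
    exact (Nat.choose_symm (by omega)).symm

theorem sum_split (N : ℕ) :
    2^N
      = (∑ k ∈ range (N+1), if N+1 < 2*k then N.choose k else 0)
      + (∑ k ∈ range (N+1), if 2*k+1 < N then N.choose k else 0)
      + (∑ k ∈ range (N+1), if (¬(N+1 < 2*k) ∧ ¬(2*k+1 < N)) then N.choose k else 0) := by
  rw [← Finset.sum_add_distrib, ← Finset.sum_add_distrib, ← Nat.sum_range_choose]
  apply Finset.sum_congr rfl
  intro k _
  split_ifs <;> omega

theorem two_mul_A_even (m : ℕ) :
    2 * (∑ k ∈ range (2*m+1), if 2*m+1 < 2*k then (2*m).choose k else 0)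
      + (2*m).choose m = 2^(2*m) := by
  have h := sum_split (2*m)
  rw [← sum_reflect] at h
  have hmid : (∑ k ∈ range (2*m+1),
      if (¬(2*m+1 < 2*k) ∧ ¬(2*k+1 < 2*m)) then (2*m).choose k else 0) = (2*m).choose m := by
    rw [← Finset.sum_filter]
    have : (range (2*m+1)).filter (fun k => ¬(2*m+1 < 2*k) ∧ ¬(2*k+1 < 2*m)) = {m} := by
      ext k
      simp only [Finset.mem_filter, Finset.mem_range, Finset.mem_singleton]
      omega
    rw [this, Finset.sum_singleton]
  omega

theorem two_mul_A_odd (m : ℕ) :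
    2 * (∑ k ∈ range (2*m+2), if 2*m+2 < 2*k then (2*m+1).choose k else 0)
      + 2 * (2*m+1).choose (m+1) = 2^(2*m+1) := by
  have h := sum_split (2*m+1)
  rw [← sum_reflect] at h
  have hmid : (∑ k ∈ range (2*m+2),
      if (¬(2*m+1+1 < 2*k) ∧ ¬(2*k+1 < 2*m+1)) then (2*m+1).choose k else 0)
        = (2*m+1).choose m + (2*m+1).choose (m+1) := by
    rw [← Finset.sum_filter]
    have : (range (2*m+2)).filter (fun k => ¬(2*m+1+1 < 2*k) ∧ ¬(2*k+1 < 2*m+1)) = {m, m+1} := by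
      ext k
      simp only [Finset.mem_filter, Finset.mem_range, Finset.mem_insert, Finset.mem_singleton]
      omega
    rw [this, Finset.sum_pair (by omega)]
  have hsym := Nat.choose_symm_half m
  have h2 : 2*m+1+1 = 2*m+2 := by omega
  rw [h2] at h hmid
  omega


open Classical in
theorem g_card (n : ℕ) :
    countFn {x : List (Fin 2) | x ++ [0] ∈ LMAJ} (n+1) + n.choose ((n+2)/2) = 2^n := by
  classical
  rw [countFn, countFn_eq_card']
  have hmem : ∀ w ∈ allW (Fin 2) (n+1),
      (w ∈ {x : List (Fin 2) | x ++ [0] ∈ LMAJ}) ↔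
        (n+2 < 2 * w.count 1 ∨ (n+2 = 2 * w.count 1 ∧ w.head? = some 1)) := by
    intro w hw
    have hlen : w.length = n+1 := mem_allW.mp hw
    have hc := count_zero_add_count_one w
    have hy0 : (w ++ [(0:Fin 2)]).count 0 = w.count 0 + 1 := by simp [List.count_append]
    have hy1 : (w ++ [(0:Fin 2)]).count 1 = w.count 1 := by simp [List.count_append]
    have hh : ((w ++ [(0:Fin 2)]).head? = some 1) ↔ (w.head? = some 1) := by
      cases w with
      | nil => simp
      | cons a t => simp
    have hdef : w ∈ {x : List (Fin 2) | x ++ [0] ∈ LMAJ} ↔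
        ((w ++ [0]).count 0 < (w ++ [0]).count 1 ∨
          ((w ++ [0]).count 0 = (w ++ [0]).count 1 ∧ (w ++ [0]).head? = some 1)) := Iff.rfl
    rw [hdef, hy0, hy1, hh]
    constructor
    · rintro (h | ⟨h, hH⟩)
      · left; omega
      · right; exact ⟨by omega, hH⟩
    · rintro (h | ⟨h, hH⟩)
      · left; omega
      · right; exact ⟨by omega, hH⟩
  rw [Finset.filter_congr hmem, Finset.filter_or]
  rw [Finset.card_union_of_disjoint (by
    rw [Finset.disjoint_left]
    intro w hw1 hw2
    rw [Finset.mem_filter] at hw1 hw2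
    have := hw1.2
    have := hw2.2.1
    omega)]
  have hA := card_filter_count (n+1) (fun k => n+2 < 2*k)
  have hB1 := card_count_head n (fun k => n+2 = 2*k)
  rw [hA, hB1]
  have hB2 : ((allW (Fin 2) n).filter (fun t => n+2 = 2*(t.count 1 + 1)))
      = ((allW (Fin 2) n).filter (fun t => n = 2 * t.count 1)) := by
    apply Finset.filter_congr
    intro t _
    constructor <;> (intro h; omega)
  rw [hB2, card_filter_count n (fun k => n = 2*k)]
  rcases Nat.even_or_odd n with he | ho
  · obtain ⟨m, hm⟩ := he
    have hm2 : n = 2*m := by omega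
    subst hm2
    have hBval : (∑ k ∈ Finset.range (2*m+1), if 2*m = 2*k then (2*m).choose k else 0)
        = (2*m).choose m := by
      rw [← Finset.sum_filter]
      have : (Finset.range (2*m+1)).filter (fun k => 2*m = 2*k) = {m} := by
        ext k
        simp only [Finset.mem_filter, Finset.mem_range, Finset.mem_singleton]
        omega
      rw [this, Finset.sum_singleton]
    rw [hBval]
    have hAval := two_mul_A_odd m
    have e1 : 2*m+1+1 = 2*m+2 := by omega
    rw [e1]
    have hcs : (2*m+1).choose (m+1) = (2*m).choose m + (2*m).choose (m+1) :=
      Nat.choose_succ_succ (2*m) m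
    have hpow : 2^(2*m+1) = 2 * 2^(2*m) := by ring
    rw [hpow] at hAval
    generalize 2^(2*m) = P at hAval ⊢
    have hdiv : (2*m+2)/2 = m+1 := by omega
    rw [hdiv]
    omega
  · obtain ⟨m, hm⟩ := ho
    subst hm
    have hBval : (∑ k ∈ Finset.range (2*m+1+1), if 2*m+1 = 2*k then (2*m+1).choose k else 0)
        = 0 := by
      apply Finset.sum_eq_zero
      intro k _
      rw [if_neg (by omega)]
    rw [hBval]
    have hAval := two_mul_A_even (m+1)
    rw [show 2*(m+1)+1 = 2*m+1+2 from by omega, show 2*(m+1) = 2*m+1+1 from by omega] at hAval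
    rw [show 2*m+1+1+1 = 2*m+1+2 from rfl]
    have hcs : (2*m+1+1).choose (m+1) = (2*m+1).choose m + (2*m+1).choose (m+1) :=
      Nat.choose_succ_succ (2*m+1) m
    have hsym := Nat.choose_symm_half m
    have hpow : 2^(2*m+1+1) = 2 * 2^(2*m+1) := by ring
    rw [hpow] at hAval
    generalize 2^(2*m+1) = P at hAval ⊢
    have hdiv : (2*m+1+2)/2 = m+1 := by omega
    rw [hdiv]
    omega



theorem lucas2 (n k : ℕ) :
    n.choose k % 2 = (((n%2).choose (k%2)) * ((n/2).choose (k/2))) % 2 := by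
  haveI : Fact (Nat.Prime 2) := ⟨Nat.prime_two⟩
  exact Choose.choose_modEq_choose_mod_mul_choose_div_nat

theorem central_even (j : ℕ) (hj : 1 ≤ j) : (2*j).choose j % 2 = 0 := by
  induction j using Nat.strong_induction_on with
  | _ j ih =>
    have h := lucas2 (2*j) j
    have e1 : (2*j) % 2 = 0 := by omega
    have e2 : (2*j)/2 = j := by omega
    rw [e1, e2] at h
    rcases Nat.even_or_odd j with he | ho
    · obtain ⟨i, hi⟩ := he
      have hij : j = 2*i := by omega
      subst hij
      have e3 : (2*i) % 2 = 0 := by omega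
      have e4 : (2*i)/2 = i := by omega
      rw [e3, e4] at h
      have hrec : (2*i).choose i % 2 = 0 := ih i (by omega) (by omega)
      simp only [Nat.choose_self, one_mul] at h
      omega
    · obtain ⟨i, hi⟩ := ho
      subst hi
      have e3 : (2*i+1) % 2 = 1 := by omega
      rw [e3] at h
      simp at h
      exact h

theorem oddhalf_even (j : ℕ) (h : ¬∃ t, j+1 = 2^t) : (2*j+1).choose (j+1) % 2 = 0 := by
  induction j using Nat.strong_induction_on with
  | _ j ih =>
    have hl := lucas2 (2*j+1) (j+1)
    have e1 : (2*j+1) % 2 = 1 := by omega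
    have e2 : (2*j+1)/2 = j := by omega
    rw [e1, e2] at hl
    rcases Nat.even_or_odd j with he | ho
    · obtain ⟨i, hi⟩ := he
      have hij : j = 2*i := by omega
      subst hij
      have hi1 : 1 ≤ i := by
        by_contra hi0
        exact h ⟨0, by omega⟩
      have e3 : (2*i+1) % 2 = 1 := by omega
      have e4 : (2*i+1)/2 = i := by omega
      rw [e3, e4] at hl
      have := central_even i hi1
      simp only [Nat.choose_self, one_mul] at hl
      omega
    · obtain ⟨i, hi⟩ := ho
      subst hi
      have e3 : (2*i+1+1) % 2 = 0 := by omega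
      have e4 : (2*i+1+1)/2 = i+1 := by omega
      rw [e3, e4] at hl
      have hrec : (2*i+1).choose (i+1) % 2 = 0 := by
        apply ih i (by omega)
        rintro ⟨t, ht⟩
        exact h ⟨t+1, by rw [pow_succ]; omega⟩
      simp only [Nat.choose_zero_right, one_mul] at hl
      omega

theorem sub_one_central_even (m : ℕ) (hm : 1 ≤ m) (h : ¬∃ t, m = 2^t) :
    (2*m-1).choose m % 2 = 0 := by
  induction m using Nat.strong_induction_on with
  | _ m ih =>
    have hl := lucas2 (2*m-1) m
    have e1 : (2*m-1) % 2 = 1 := by omega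
    have e2 : (2*m-1)/2 = m-1 := by omega
    rw [e1, e2] at hl
    rcases Nat.even_or_odd m with he | ho
    · obtain ⟨i, hi⟩ := he
      have him : m = 2*i := by omega
      subst him
      have hi1 : 1 ≤ i := by omega
      have e3 : (2*i) % 2 = 0 := by omega
      have e4 : (2*i)/2 = i := by omega
      rw [e3, e4] at hl
      have hnp : ¬∃ t, i = 2^t := by
        rintro ⟨t, ht⟩
        exact h ⟨t+1, by rw [pow_succ]; omega⟩
      have hrec := ih i (by omega) hi1 hnp
      have e5 : 2*i - 1 = 2*i - 1 := rfl
      simp only [Nat.choose_zero_right, one_mul] at hl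
      omega
    · obtain ⟨i, hi⟩ := ho
      subst hi
      have hi1 : 1 ≤ i := by
        by_contra hi0
        exact h ⟨0, by omega⟩
      have e3 : (2*i+1) % 2 = 1 := by omega
      have e4 : (2*i+1-1) = 2*i := by omega
      rw [e3] at hl
      have e5 : (2*(2*i+1)-1) = 4*i+1 := by omega
      have e6 : 2*(2*i+1) - 1 - 1 = 4*i := by omega
      have e7 : (2*(2*i+1)-1)/2 - 0 = 2*i := by omega
      -- careful: e2 gave (2m-1)/2 = m - 1 = 2*i
      rw [e4] at hl
      have hc := central_even i hi1
      have e8 : (2*i+1)/2 = i := by omega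
      rw [e8] at hl
      simp only [Nat.choose_self, one_mul] at hl
      omega

theorem even_mplus1_choose (m : ℕ) (h : ¬∃ t, m+1 = 2^t) : (2*m).choose (m+1) % 2 = 0 := by
  have hl := lucas2 (2*m) (m+1)
  have e1 : (2*m) % 2 = 0 := by omega
  have e2 : (2*m)/2 = m := by omega
  rw [e1, e2] at hl
  rcases Nat.even_or_odd m with he | ho
  · obtain ⟨i, hi⟩ := he
    have him : m = 2*i := by omega
    subst him
    have e3 : (2*i+1) % 2 = 1 := by omega
    rw [e3] at hl
    simpa using hl
  · obtain ⟨i, hi⟩ := ho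
    subst hi
    have e3 : (2*i+1+1) % 2 = 0 := by omega
    have e4 : (2*i+1+1)/2 = i+1 := by omega
    rw [e3, e4] at hl
    have hrec : (2*i+1).choose (i+1) % 2 = 0 := by
      apply oddhalf_even
      rintro ⟨t, ht⟩
      exact h ⟨t+1, by rw [pow_succ]; omega⟩
    simp only [Nat.choose_zero_right, one_mul] at hl
    omega

theorem pow_sub_one_choose_odd (k : ℕ) : ∀ j, j < 2^k → (2^k - 1).choose j % 2 = 1 := by
  induction k with
  | zero =>
    intro j hj
    interval_cases j
    simp
  | succ k ih =>
    intro j hj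
    have h1 : 1 ≤ 2^k := Nat.one_le_two_pow
    have hpk : 2^(k+1) = 2*2^k := by rw [pow_succ]; ring
    have hl := lucas2 (2^(k+1) - 1) j
    have e1 : (2^(k+1)-1) % 2 = 1 := by omega
    have e2 : (2^(k+1)-1)/2 = 2^k - 1 := by omega
    rw [e1, e2] at hl
    have hrec : (2^k - 1).choose (j/2) % 2 = 1 := ih (j/2) (by omega)
    have hj2 : j % 2 = 0 ∨ j % 2 = 1 := by omega
    rcases hj2 with h2 | h2 <;> rw [h2] at hl <;>
      simp only [Nat.choose_self, Nat.choose_zero_right, one_mul] at hl <;> omega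

theorem not_pow_between {k n : ℕ} (h1 : 2^k < n) (h2 : n < 2^(k+1)) : ¬∃ t, n = 2^t := by
  rintro ⟨t, rfl⟩
  have ht : k < t := (Nat.pow_lt_pow_iff_right (by norm_num : 1 < 2)).mp h1
  have : 2^(k+1) ≤ 2^t := Nat.pow_le_pow_right (by norm_num) (by omega)
  omega


section DFAsec

variable {β σ : Type} [Fintype β] [Fintype σ]

open Classical in
noncomputable def cntSt (M : DFA β σ) (n : ℕ) (s : σ) : ℕ :=
  ((allW β n).filter (fun w => M.evalFrom M.start w = s)).card

open Classical in
theorem cntSt_succ (M : DFA β σ) (n : ℕ) (s : σ) :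
    cntSt M (n+1) s
      = ∑ t : σ, (Finset.univ.filter (fun a : β => M.step t a = s)).card * cntSt M n t := by
  classical
  rw [cntSt, card_filter_allW_succ]
  have he : ∀ (w : List β) (a : β),
      M.evalFrom M.start (w ++ [a]) = M.step (M.evalFrom M.start w) a :=
    fun w a => DFA.evalFrom_append_singleton _ _ _ _
  have hinner : ∀ w : List β,
      (∑ a : β, if M.evalFrom M.start (w ++ [a]) = s then 1 else 0)
        = (Finset.univ.filter (fun a : β => M.step (M.evalFrom M.start w) a = s)).card := by
    intro w
    rw [Finset.card_filter]
    apply Finset.sum_congr rfl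
    intro a _
    rw [he]
  simp only [hinner]
  rw [← Finset.sum_fiberwise_of_maps_to
    (g := fun w => M.evalFrom M.start w) (t := (Finset.univ : Finset σ))
    (fun w _ => Finset.mem_univ _)]
  apply Finset.sum_congr rfl
  intro t _
  rw [cntSt]
  have hcongr : ∀ w ∈ (allW β n).filter (fun w => M.evalFrom M.start w = t),
      (Finset.univ.filter (fun a : β => M.step (M.evalFrom M.start w) a = s)).card
        = (Finset.univ.filter (fun a : β => M.step t a = s)).card := by
    intro w hw
    rw [(Finset.mem_filter.mp hw).2]
  rw [Finset.sum_congr rfl hcongr, Finset.sum_const, smul_eq_mul, mul_comm]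

open Classical in
theorem cntSt_mod_two_period (M : DFA β σ) :
    ∃ N p, 0 < p ∧ ∀ n, N ≤ n → ∀ s, ((cntSt M (n+p) s : ZMod 2)) = (cntSt M n s : ZMod 2) := by
  classical
  set V : ℕ → (σ → ZMod 2) := fun n s => (cntSt M n s : ZMod 2) with hV
  set T : (σ → ZMod 2) → (σ → ZMod 2) :=
    fun v s => ∑ t : σ, ((Finset.univ.filter (fun a : β => M.step t a = s)).card : ZMod 2) * v t
    with hT
  have hTV : ∀ n, V (n+1) = T (V n) := by
    intro n
    funext s
    show ((cntSt M (n+1) s : ZMod 2)) = _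
    rw [cntSt_succ]
    push_cast
    rfl
  obtain ⟨i0, j0, hne, heq0⟩ := Finite.exists_ne_map_eq_of_infinite V
  obtain ⟨i, j, hij, heq⟩ : ∃ i j, i < j ∧ V i = V j := by
    rcases Nat.lt_or_ge i0 j0 with h | h
    · exact ⟨i0, j0, h, heq0⟩
    · exact ⟨j0, i0, by omega, heq0.symm⟩
  have hper : ∀ n, i ≤ n → V (n + (j - i)) = V n := by
    intro n hn
    induction n, hn using Nat.le_induction with
    | base =>
      have e : i + (j - i) = j := by omega
      rw [e]
      exact heq.symm
    | succ n hn ihn =>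
      have e : n + 1 + (j - i) = (n + (j - i)) + 1 := by omega
      rw [e, hTV, ihn, ← hTV]
  exact ⟨i, j - i, by omega, fun n hn s => congrFun (hper n hn) s⟩

open Classical in
theorem countFn_mod_two_period {L : Set (List β)} (h : IsRegularLang L) :
    ∃ N p, 0 < p ∧ ∀ n, N ≤ n → countFn L (n+p) % 2 = countFn L n % 2 := by
  classical
  obtain ⟨σ', hfin, M, hM⟩ := h
  haveI := hfin
  obtain ⟨N, p, hp, hperiod⟩ := cntSt_mod_two_period M
  refine ⟨N, p, hp, ?_⟩
  intro n hn
  have key : ∀ m, (countFn L m : ZMod 2)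
      = ∑ s ∈ Finset.univ.filter (fun s => s ∈ M.accept), (cntSt M m s : ZMod 2) := by
    intro m
    unfold countFn
    rw [countFn_eq_card']
    have hpred : ((allW β m).filter (fun w => w ∈ L))
        = ((allW β m).filter (fun w => M.evalFrom M.start w ∈ M.accept)) := by
      apply Finset.filter_congr
      intro w _
      rw [← hM w]
      exact M.mem_accepts
    rw [hpred]
    rw [Finset.card_eq_sum_card_fiberwise (f := fun w => M.evalFrom M.start w)
      (t := Finset.univ.filter (fun s => s ∈ M.accept))
      (fun w hw => by
        simp only [Finset.mem_coe, Finset.mem_filter] at hw ⊢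
        exact ⟨Finset.mem_univ _, hw.2⟩)]
    push_cast
    apply Finset.sum_congr rfl
    intro s hs
    have heq2 : ((allW β m).filter (fun w => M.evalFrom M.start w ∈ M.accept)).filter
          (fun w => M.evalFrom M.start w = s)
        = (allW β m).filter (fun w => M.evalFrom M.start w = s) := by
      rw [Finset.filter_filter]
      apply Finset.filter_congr
      intro w _
      simp only [Finset.mem_filter] at hs
      constructor
      · rintro ⟨_, h2⟩
        exact h2
      · intro h2
        exact ⟨by rw [h2]; exact hs.2, h2⟩
    rw [heq2, cntSt]
  have hcast : (countFn L (n+p) : ZMod 2) = (countFn L n : ZMod 2) := by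
    rw [key, key]
    apply Finset.sum_congr rfl
    intro s _
    exact hperiod n hn s
  exact (ZMod.natCast_eq_natCast_iff _ _ _).mp hcast

end DFAsec


-- ### parity corollaries for the quotient language

theorem g_odd_at_pow (k : ℕ) (hk : 1 ≤ k) :
    countFn {x : List (Fin 2) | x ++ [0] ∈ LMAJ} (2^k) % 2 = 1 := by
  have h1 : 1 ≤ 2^k := Nat.one_le_two_pow
  have hk2 : 2^k = 2*2^(k-1) := by
    conv_lhs => rw [show k = (k-1)+1 by omega]
    rw [pow_succ]; ring
  have hpow1 : 1 ≤ 2^(k-1) := Nat.one_le_two_pow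
  have hg := g_card (2^k - 1)
  rw [show 2^k - 1 + 1 = 2^k by omega] at hg
  have hdiv : (2^k - 1 + 2)/2 = 2^(k-1) := by omega
  rw [hdiv] at hg
  have hodd := pow_sub_one_choose_odd k (2^(k-1)) (by omega)
  have heven : 2^(2^k - 1) % 2 = 0 := by
    have h3 : (2:ℕ)^(2^k - 1) = 2 * 2^(2^k - 1 - 1) := by
      conv_lhs => rw [show 2^k - 1 = (2^k - 1 - 1) + 1 by omega]
      rw [pow_succ]; ring
    omega
  omega

theorem g_even_between (k n : ℕ) (h1 : 2^k < n) (h2 : n < 2^(k+1) - 1) :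
    countFn {x : List (Fin 2) | x ++ [0] ∈ LMAJ} n % 2 = 0 := by
  have hx : 1 ≤ 2^k := Nat.one_le_two_pow
  have hx1 : 1 ≤ 2^(k+1) := Nat.one_le_two_pow
  have hn2 : 2 ≤ n := by omega
  obtain ⟨n', rfl⟩ : ∃ n', n = n' + 1 := ⟨n - 1, by omega⟩
  have hg := g_card n'
  have heven : 2^n' % 2 = 0 := by
    have h3 : (2:ℕ)^n' = 2 * 2^(n' - 1) := by
      conv_lhs => rw [show n' = (n' - 1) + 1 by omega]
      rw [pow_succ]; ring
    omega
  have hc : n'.choose ((n'+2)/2) % 2 = 0 := by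
    rcases Nat.even_or_odd (n'+1) with he | ho
    · obtain ⟨m, hm⟩ := he
      have hm1 : 1 ≤ m := by omega
      have hdiv : (n'+2)/2 = m := by omega
      rw [hdiv, show n' = 2*m - 1 by omega]
      apply sub_one_central_even m hm1
      rintro ⟨t, rfl⟩
      have hnp := not_pow_between (n := n'+1) (k := k) h1 (by omega)
      exact hnp ⟨t+1, by rw [pow_succ]; omega⟩
    · obtain ⟨m, hm⟩ := ho
      have hdiv : (n'+2)/2 = m+1 := by omega
      rw [hdiv, show n' = 2*m by omega]
      apply even_mplus1_choose
      rintro ⟨t, ht⟩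
      have h2m : n'+1 = 2^(t+1) - 1 := by rw [pow_succ]; omega
      have hgt : 2^k < 2^(t+1) := by omega
      have hlt : k < t+1 := (Nat.pow_lt_pow_iff_right (by norm_num : 1 < 2)).mp hgt
      have hle : 2^(k+1) ≤ 2^(t+1) := Nat.pow_le_pow_right (by norm_num) (by omega)
      omega
  omega

-- ### the DFA for words starting with 1

def M3 : DFA (Fin 2) (Fin 3) where
  step := fun s a => if s = 0 then (if a = 1 then 1 else 2) else s
  start := 0
  accept := {1}

theorem M3_sink (w : List (Fin 2)) : ∀ s : Fin 3, s ≠ 0 → M3.evalFrom s w = s := by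
  induction w with
  | nil => intro s _; rfl
  | cons a t ih =>
    intro s hs
    have hstep : M3.step s a = s := by simp [M3, hs]
    show M3.evalFrom (M3.step s a) t = s
    rw [hstep]
    exact ih s hs

theorem M3_accepts : ∀ w, w ∈ M3.accepts ↔ w ∈ {w : List (Fin 2) | w.head? = some 1} := by
  intro w
  rw [DFA.mem_accepts]
  cases w with
  | nil =>
    constructor
    · intro h
      have h2 : (0 : Fin 3) = 1 := h
      exact absurd h2 (by decide)
    · intro h
      simp at h
  | cons a t =>
    have ha : a = 0 ∨ a = 1 := by
      rcases a with ⟨av, hav⟩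
      interval_cases av
      · left; rfl
      · right; rfl
    have he : M3.eval (a :: t) = M3.evalFrom (M3.step M3.start a) t := rfl
    rw [he]
    rcases ha with rfl | rfl
    · rw [show M3.step M3.start 0 = 2 from by decide, M3_sink t 2 (by decide)]
      constructor
      · intro h
        have h2 : (2 : Fin 3) = 1 := h
        exact absurd h2 (by decide)
      · intro h
        simp only [Set.mem_setOf_eq, List.head?_cons, Option.some.injEq] at h
        exact absurd h (by decide)
    · rw [show M3.step M3.start 1 = 1 from by decide, M3_sink t 1 (by decide)]
      constructor
      · intro _
        simp
      · intro _
        exact rfl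

theorem regular_Start1 : IsRegularLang {w : List (Fin 2) | w.head? = some 1} :=
  ⟨Fin 3, inferInstance, M3, M3_accepts⟩

-- ### counting functions of Start1 and LMAJ

open Classical in
theorem countFn_Start1_zero : countFn {w : List (Fin 2) | w.head? = some 1} 0 = 0 := by
  unfold countFn
  rw [countFn_eq_card']
  rw [show allW (Fin 2) 0 = {[]} from rfl]
  rw [Finset.filter_singleton]
  rw [if_neg (by simp)]
  simp

open Classical in
theorem countFn_Start1_succ (n : ℕ) :
    countFn {w : List (Fin 2) | w.head? = some 1} (n+1) = 2^n := by
  unfold countFn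
  rw [countFn_eq_card']
  rw [card_filter_allW_cons, Fin.sum_univ_two]
  simp only [Set.mem_setOf_eq, List.head?_cons, Option.some.injEq,
    show ((0:Fin 2) = 1) = False from by simp, show ((1:Fin 2) = 1) = True from by simp,
    if_true, if_false]
  rw [Finset.sum_const_zero, Finset.sum_const, zero_add, smul_eq_mul, mul_one,
    card_allW, Fintype.card_fin]

theorem sum_reflect2 (N : ℕ) :
    (∑ k ∈ Finset.range (N+1), if N < 2*k then N.choose k else 0)
      = ∑ k ∈ Finset.range (N+1), if 2*k < N then N.choose k else 0 := by
  rw [← Finset.sum_filter, ← Finset.sum_filter]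
  apply Finset.sum_nbij' (i := fun k => N - k) (j := fun k => N - k)
  · intro a ha
    simp only [Finset.mem_filter, Finset.mem_range] at ha ⊢
    omega
  · intro a ha
    simp only [Finset.mem_filter, Finset.mem_range] at ha ⊢
    omega
  · intro a ha
    simp only [Finset.mem_filter, Finset.mem_range] at ha
    omega
  · intro a ha
    simp only [Finset.mem_filter, Finset.mem_range] at ha
    omega
  · intro a ha
    simp only [Finset.mem_filter, Finset.mem_range] at ha
    exact (Nat.choose_symm (by omega)).symm

theorem sum_split2 (N : ℕ) :
    2^N
      = (∑ k ∈ Finset.range (N+1), if N < 2*k then N.choose k else 0)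
      + (∑ k ∈ Finset.range (N+1), if 2*k < N then N.choose k else 0)
      + (∑ k ∈ Finset.range (N+1), if (¬(N < 2*k) ∧ ¬(2*k < N)) then N.choose k else 0) := by
  rw [← Finset.sum_add_distrib, ← Finset.sum_add_distrib, ← Nat.sum_range_choose]
  apply Finset.sum_congr rfl
  intro k _
  split_ifs <;> omega

theorem two_mul_A2_even (m : ℕ) :
    2 * (∑ k ∈ Finset.range (2*m+1), if 2*m < 2*k then (2*m).choose k else 0)
      + (2*m).choose m = 2^(2*m) := by
  have h := sum_split2 (2*m)
  rw [← sum_reflect2] at h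
  have hmid : (∑ k ∈ Finset.range (2*m+1),
      if (¬(2*m < 2*k) ∧ ¬(2*k < 2*m)) then (2*m).choose k else 0) = (2*m).choose m := by
    rw [← Finset.sum_filter]
    have he : (Finset.range (2*m+1)).filter (fun k => ¬(2*m < 2*k) ∧ ¬(2*k < 2*m)) = {m} := by
      ext k
      simp only [Finset.mem_filter, Finset.mem_range, Finset.mem_singleton]
      omega
    rw [he, Finset.sum_singleton]
  omega

theorem two_mul_A2_odd (m : ℕ) :
    2 * (∑ k ∈ Finset.range (2*m+2), if 2*m+1 < 2*k then (2*m+1).choose k else 0)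
      = 2^(2*m+1) := by
  have h := sum_split2 (2*m+1)
  rw [← sum_reflect2] at h
  have hmid : (∑ k ∈ Finset.range (2*m+1+1),
      if (¬(2*m+1 < 2*k) ∧ ¬(2*k < 2*m+1)) then (2*m+1).choose k else 0) = 0 := by
    apply Finset.sum_eq_zero
    intro k _
    rw [if_neg (by omega)]
  rw [show 2*m+1+1 = 2*m+2 from rfl] at h hmid
  omega

open Classical in
theorem countFn_LMAJ_zero : countFn LMAJ 0 = 0 := by
  unfold countFn
  rw [countFn_eq_card']
  rw [show allW (Fin 2) 0 = {[]} from rfl]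
  rw [Finset.filter_singleton]
  rw [if_neg (by
    intro h
    rcases h with h | ⟨_, h2⟩
    · simp at h
    · simp at h2)]
  simp

open Classical in
theorem countFn_LMAJ_succ (n : ℕ) : countFn LMAJ (n+1) = 2^n := by
  classical
  unfold countFn
  rw [countFn_eq_card']
  have hmem : ∀ w ∈ allW (Fin 2) (n+1),
      (w ∈ LMAJ) ↔
        (n+1 < 2 * w.count 1 ∨ (n+1 = 2 * w.count 1 ∧ w.head? = some 1)) := by
    intro w hw
    have hlen : w.length = n+1 := mem_allW.mp hw
    have hc := count_zero_add_count_one w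
    have hdef : w ∈ LMAJ ↔
        (w.count 0 < w.count 1 ∨ (w.count 0 = w.count 1 ∧ w.head? = some 1)) := Iff.rfl
    rw [hdef]
    constructor
    · rintro (h | ⟨h, hH⟩)
      · left; omega
      · right; exact ⟨by omega, hH⟩
    · rintro (h | ⟨h, hH⟩)
      · left; omega
      · right; exact ⟨by omega, hH⟩
  rw [Finset.filter_congr hmem, Finset.filter_or]
  rw [Finset.card_union_of_disjoint (by
    rw [Finset.disjoint_left]
    intro w hw1 hw2
    rw [Finset.mem_filter] at hw1 hw2
    have := hw1.2
    have := hw2.2.1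
    omega)]
  have hA := card_filter_count (n+1) (fun k => n+1 < 2*k)
  have hB1 := card_count_head n (fun k => n+1 = 2*k)
  rw [hA, hB1]
  have hB3 := card_filter_count n (fun k => n+1 = 2*(k+1))
  rw [hB3]
  rcases Nat.even_or_odd n with he | ho
  · obtain ⟨m, hm⟩ := he
    have hm2 : n = 2*m := by omega
    subst hm2
    have hBval : (∑ k ∈ Finset.range (2*m+1), if 2*m+1 = 2*(k+1) then (2*m).choose k else 0)
        = 0 := by
      apply Finset.sum_eq_zero
      intro k _
      rw [if_neg (by omega)]
    rw [hBval]
    have hAval := two_mul_A2_odd m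
    rw [show 2*m+1+1 = 2*m+2 from rfl]
    have hpow : 2^(2*m+1) = 2 * 2^(2*m) := by ring
    rw [hpow] at hAval
    omega
  · obtain ⟨m, hm⟩ := ho
    subst hm
    have hBval : (∑ k ∈ Finset.range (2*m+1+1), if 2*m+1+1 = 2*(k+1) then (2*m+1).choose k else 0)
        = (2*m+1).choose m := by
      rw [← Finset.sum_filter]
      have he2 : (Finset.range (2*m+1+1)).filter (fun k => 2*m+1+1 = 2*(k+1)) = {m} := by
        ext k
        simp only [Finset.mem_filter, Finset.mem_range, Finset.mem_singleton]
        omega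
      rw [he2, Finset.sum_singleton]
    rw [hBval]
    have hAval := two_mul_A2_even (m+1)
    rw [show 2*(m+1) = 2*m+1+1 from by omega] at hAval
    have hcs : (2*m+1+1).choose (m+1) = (2*m+1).choose m + (2*m+1).choose (m+1) :=
      Nat.choose_succ_succ (2*m+1) m
    have hsym := Nat.choose_symm_half m
    have hpow : 2^(2*m+1+1) = 2 * 2^(2*m+1) := by ring
    rw [hpow] at hAval
    generalize 2^(2*m+1) = P at hAval ⊢
    omega

theorem countFn_LMAJ_eq (n : ℕ) :
    countFn {w : List (Fin 2) | w.head? = some 1} n = countFn LMAJ n := by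
  cases n with
  | zero => rw [countFn_Start1_zero, countFn_LMAJ_zero]
  | succ n => rw [countFn_Start1_succ, countFn_LMAJ_succ]

theorem countingRegular_LMAJ : CountingRegular LMAJ :=
  ⟨Fin 2, inferInstance, {w : List (Fin 2) | w.head? = some 1}, regular_Start1, countFn_LMAJ_eq⟩

-- ### reversal

theorem countFn_rev (L : Set (List (Fin 2))) (n : ℕ) :
    countFn {w | ∃ v ∈ L, w = v.reverse} n = countFn L n := by
  unfold countFn
  have himg : {w | w ∈ {w | ∃ v ∈ L, w = v.reverse} ∧ w.length = n}
      = List.reverse '' {w | w ∈ L ∧ w.length = n} := by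
    ext w
    simp only [Set.mem_setOf_eq, Set.mem_image]
    constructor
    · rintro ⟨⟨v, hv, rfl⟩, hlen⟩
      exact ⟨v, ⟨hv, by simpa using hlen⟩, rfl⟩
    · rintro ⟨v, ⟨hv, hlen⟩, rfl⟩
      exact ⟨⟨v, hv, rfl⟩, by simpa using hlen⟩
  rw [himg, Set.ncard_image_of_injective _ List.reverse_injective]

theorem countingRegular_LMAJrev : CountingRegular LMAJrev :=
  ⟨Fin 2, inferInstance, {w : List (Fin 2) | w.head? = some 1}, regular_Start1,
    fun n => by rw [countFn_LMAJ_eq n, ← countFn_rev LMAJ n]; rfl⟩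

-- ### the quotient languages

theorem Q2_eq : {x : List (Fin 2) | (0 :: x) ∈ LMAJrev}
    = {w | ∃ v ∈ {x : List (Fin 2) | x ++ [0] ∈ LMAJ}, w = v.reverse} := by
  ext x
  simp only [Set.mem_setOf_eq, LMAJrev]
  constructor
  · rintro ⟨v, hv, hrev⟩
    refine ⟨x.reverse, ?_, by simp⟩
    have hveq : x.reverse ++ [0] = v := by
      have h3 := congrArg List.reverse hrev
      simpa using h3
    rw [hveq]
    exact hv
  · rintro ⟨v, hv, rfl⟩
    refine ⟨v ++ [0], hv, ?_⟩
    simp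

theorem countFn_Q2_eq (n : ℕ) :
    countFn {x : List (Fin 2) | (0 :: x) ∈ LMAJrev} n
      = countFn {x : List (Fin 2) | x ++ [0] ∈ LMAJ} n := by
  rw [Q2_eq, countFn_rev]

-- ### the negative results

theorem not_countingRegular_Q1 :
    ¬ CountingRegular {x : List (Fin 2) | x ++ [0] ∈ LMAJ} := by
  rintro ⟨β, hβ, L', hreg, hcnt⟩
  haveI := hβ
  obtain ⟨N, p, hp, hper⟩ := countFn_mod_two_period hreg
  set k := N + p + 2 with hk
  have hklt : k < 2^k := Nat.lt_two_pow_self (n := k)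
  have hk1 : 1 ≤ k := by omega
  have hNle : N ≤ 2^k := by omega
  have hodd := g_odd_at_pow k hk1
  have hpow2 : 2^(k+1) = 2*2^k := by ring
  have heven := g_even_between k (2^k + p) (by omega) (by omega)
  have hper2 := hper (2^k) hNle
  rw [hcnt, hcnt] at hper2
  omega

theorem not_countingRegular_Q2 :
    ¬ CountingRegular {x : List (Fin 2) | (0 :: x) ∈ LMAJrev} := by
  rintro ⟨β, hβ, L', hreg, hcnt⟩
  apply not_countingRegular_Q1
  exact ⟨β, hβ, L', hreg, fun n => by rw [hcnt n, countFn_Q2_eq]⟩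

end CRaux


/-- `L_MAJ` and `L_MAJ^R` are counting-regular, but the right quotient `L_MAJ{0}⁻¹` and the
left quotient `{0}⁻¹(L_MAJ^R)` are not: counting-regular languages are not closed under
right or left quotient with a single symbol. -/
theorem stmt15 :
    CountingRegular LMAJ ∧ CountingRegular LMAJrev ∧
    ¬ CountingRegular {x : List (Fin 2) | x ++ [0] ∈ LMAJ} ∧
    ¬ CountingRegular {x : List (Fin 2) | (0 :: x) ∈ LMAJrev} := by
  exact ⟨CRaux.countingRegular_LMAJ, CRaux.countingRegular_LMAJrev,
    CRaux.not_countingRegular_Q1, CRaux.not_countingRegular_Q2⟩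
end

section
/- There exists a language L ⊆ {a,b}* such that: (i) L is thin, with exactly one word of each length n ≥ 1 and no word of length 0; (ii) L is letter-bounded with L ⊆ a*ba* and every word of L contains exactly one b (so the Parikh image of L equals that of the regular language a*b, hence L is semilinear); (iii) L is counting-regular; and (iv) L is not recursively enumerable (i.e., under any computable encoding of words of {a,b}* as natural numbers, the set of codes of words of L is not computably enumerable). -/
open Nat.Partrec (Code)
open Nat.Partrec.Code

attribute [local instance] Classical.propDecidable

/-- The underlying non-c.e. set: complement of the halting problem. -/
def sS (n : ℕ) : Prop := (eval (Denumerable.ofNat Code n) 0).Dom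

/-- The unique word of each length `n+1`. -/
noncomputable def fw : ℕ → List (Fin 2)
  | 0 => [1]
  | (n+1) =>
    if sS n then List.replicate (n+1) 0 ++ [1] else 1 :: List.replicate (n+1) 0

lemma fw_succ_pos {n : ℕ} (h : sS n) : fw (n+1) = List.replicate (n+1) 0 ++ [1] := by
  rw [fw, if_pos h]

lemma fw_succ_neg {n : ℕ} (h : ¬ sS n) : fw (n+1) = 1 :: List.replicate (n+1) 0 := by
  rw [fw, if_neg h]

lemma fw_len (n : ℕ) : (fw n).length = n + 1 := by
  cases n with
  | zero => rfl
  | succ n =>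
    by_cases h : sS n
    · simp [fw_succ_pos h]
    · simp [fw_succ_neg h]

lemma fw_mem_key (n : ℕ) :
    (1 :: List.replicate (n+1) (0 : Fin 2)) ∈ Set.range fw ↔ ¬ sS n := by
  constructor
  · rintro ⟨m, hm⟩ hS
    have hlen : m + 1 = n + 2 := by
      have := congrArg List.length hm
      simpa [fw_len] using this
    have hm' : m = n + 1 := by omega
    subst hm'
    rw [fw_succ_pos hS] at hm
    have : (List.replicate (n+1) (0 : Fin 2) ++ [1]).head? = some 0 := by
      simp [List.head?_append, List.replicate_succ]
    rw [hm] at this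
    simp at this
  · intro hS
    exact ⟨n + 1, fw_succ_neg hS⟩

lemma count_fw (n : ℕ) : (fw n).count (0 : Fin 2) = n ∧ (fw n).count (1 : Fin 2) = 1 := by
  cases n with
  | zero => simp [fw]
  | succ n =>
    by_cases h : sS n
    · simp [fw_succ_pos h, List.count_append, List.count_replicate]
    · simp [fw_succ_neg h, List.count_cons, List.count_replicate]

lemma countFn_range_fw_zero : countFn (Set.range fw) 0 = 0 := by
  have : {w | w ∈ Set.range fw ∧ w.length = 0} = (∅ : Set (List (Fin 2))) := by
    ext w
    simp only [Set.mem_setOf_eq, Set.mem_empty_iff_false, iff_false, not_and]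
    rintro ⟨m, rfl⟩
    simp [fw_len]
  rw [countFn, this, Set.ncard_empty]

lemma countFn_range_fw_succ (n : ℕ) : countFn (Set.range fw) (n + 1) = 1 := by
  have hset : {w | w ∈ Set.range fw ∧ w.length = n + 1} = {fw n} := by
    ext w
    simp only [Set.mem_setOf_eq, Set.mem_singleton_iff]
    constructor
    · rintro ⟨⟨m, rfl⟩, hlen⟩
      rw [fw_len] at hlen
      have : m = n := by omega
      rw [this]
    · rintro rfl
      exact ⟨⟨n, rfl⟩, fw_len n⟩
  rw [countFn, hset, Set.ncard_singleton]

/-- There is a thin, letter-bounded (`⊆ a*ba*`), semilinear, counting-regular language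
(over `{a, b}`, with `a = 0`, `b = 1`) that is not recursively enumerable. -/
theorem stmt19 :
    ∃ L : Set (List (Fin 2)),
      (countFn L 0 = 0 ∧ ∀ n, 1 ≤ n → countFn L n = 1) ∧
      (∀ w ∈ L, ∃ i j : ℕ, w = List.replicate i 0 ++ [1] ++ List.replicate j 0) ∧
      ({p : ℕ × ℕ | ∃ w ∈ L, p = (w.count 0, w.count 1)} = {p : ℕ × ℕ | p.2 = 1}) ∧
      CountingRegular L ∧
      ¬ REPred (· ∈ L) := by
  refine ⟨Set.range fw, ⟨countFn_range_fw_zero, ?_⟩, ?_, ?_, ?_, ?_⟩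
  · rintro (_ | n) h
    · omega
    · exact countFn_range_fw_succ n
  · -- letter-bounded
    rintro w ⟨n, rfl⟩
    cases n with
    | zero => exact ⟨0, 0, rfl⟩
    | succ n =>
      by_cases h : sS n
      · exact ⟨n + 1, 0, by simp [fw_succ_pos h]⟩
      · exact ⟨0, n + 1, by simp [fw_succ_neg h]⟩
  · -- Parikh image
    ext ⟨x, y⟩
    simp only [Set.mem_setOf_eq]
    constructor
    · rintro ⟨w, ⟨n, rfl⟩, h⟩
      obtain ⟨h0, h1⟩ := count_fw n
      rw [Prod.mk.injEq] at h
      simp [h.2, h1]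
    · rintro hy
      refine ⟨fw x, ⟨x, rfl⟩, ?_⟩
      obtain ⟨h0, h1⟩ := count_fw x
      change y = 1 at hy
      rw [h0, h1, hy]
  · -- counting regular
    refine ⟨Fin 1, inferInstance, {w | w ≠ []}, ?_, ?_⟩
    · refine ⟨Bool, inferInstance, ⟨fun _ _ => true, false, {true}⟩, fun w => ?_⟩
      have key : ∀ (l : List (Fin 1)), List.foldl (fun (_ : Bool) (_ : Fin 1) => true) true l = true := by
        intro l; induction l with
        | nil => rfl
        | cons a l ih => simpa using ih
      cases w with
      | nil => simp [DFA.mem_accepts, DFA.eval, DFA.evalFrom]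
      | cons a l => simp [DFA.mem_accepts, DFA.eval, DFA.evalFrom, key]
    · intro n
      cases n with
      | zero =>
        rw [countFn_range_fw_zero, countFn]
        convert Set.ncard_empty (List (Fin 1))
        ext w; simp [List.length_eq_zero_iff]
      | succ n =>
        rw [countFn_range_fw_succ, countFn]
        have hset : {w : List (Fin 1) | w ∈ {w | w ≠ []} ∧ w.length = n + 1}
            = {List.replicate (n+1) 0} := by
          ext w
          simp only [Set.mem_setOf_eq, Set.mem_singleton_iff]
          constructor
          · rintro ⟨hne, hlen⟩
            exact List.eq_replicate_iff.2 ⟨hlen, fun b _ => Subsingleton.elim b 0⟩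
          · rintro rfl
            simp
        rw [hset, Set.ncard_singleton]
  · -- not r.e.
    intro hre
    have hg : Computable (fun n : ℕ => 1 :: List.replicate (n+1) (0 : Fin 2)) := by
      have h1 : Primrec (fun n : ℕ => List.replicate (n+1) (0 : Fin 2)) := by
        have : Primrec (fun n : ℕ => (List.range (n+1)).map (fun _ => (0 : Fin 2))) :=
          Primrec.list_map (Primrec.list_range.comp Primrec.succ)
            (Primrec.const 0).to₂
        refine this.of_eq fun n => ?_
        simp [List.map_const']
      exact (Primrec.list_cons.comp (Primrec.const 1) h1).to_comp
    have h2 : REPred (fun n : ℕ => (1 :: List.replicate (n+1) (0 : Fin 2)) ∈ Set.range fw) :=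
      Partrec.comp hre hg
    have h3 : REPred (fun n : ℕ => ¬ sS n) :=
      h2.of_eq fun n => fw_mem_key n
    have h4 : REPred (fun c : Code => ¬ (eval c 0).Dom) := by
      have := Partrec.comp h3 (Computable.encode (α := Code))
      refine this.of_eq fun c => ?_
      show (Part.assert (¬((Denumerable.ofNat Code (Encodable.encode c)).eval 0).Dom)
          fun _ => Part.some ()) = Part.assert (¬(c.eval 0).Dom) fun _ => Part.some ()
      rw [Denumerable.ofNat_encode]
    exact ComputablePred.halting_problem_not_re 0 h4
end
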